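/- Let N ≥ 2 and λ > 0. Assume w : ℝ^N → ℝ is continuous, positive, radially symmetric, and satisfies lim_{|x|→∞} w(x)|x|^{(N−1)/2} e^{√λ|x|} = σ for some σ > 0. Assume f : ℝ → ℝ is continuous, f(t) = 0 for t ≤ 0, and |f(t)| ≤ D(|t|^{p₁} + |t|^{p₂}) for all t, where D > 0 and 1 < p₁ ≤ p₂; set F(t) := ∫₀^t f(s) ds. Assume ξ : ℝ^N → [0,1] is a C¹ function with ξ ≡ 0 on the ball B_ρ(0) and ξ ≡ 1 on ℝ^N \ B_{2ρ}(0), for some ρ > 0; for θ ∈ ℝ^N and R > 0 set Φ^{Rθ}(x) := ξ(x) w(x − Rθ). Then for every θ with |θ| ≥ 1 there is a function η : (0,∞) → [0,∞) with η(R) → 0 as R → ∞ such that for every τ ≥ 0 and every R > 0: |∫_{ℝ^N} ( F(τ Φ^{Rθ}(x)) − F(τ w(x − Rθ)) ) dx| ≤ (τ^{p₁+1} + τ^{p₂+1}) η(R) R^{−(N−1)/2} e^{−2R√λ}. -/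

import Mathlib

open MeasureTheory Filter Metric

set_option maxHeartbeats 1600000

theorem stmt5 (N : ℕ) (hN : 2 ≤ N) (lam : ℝ) (hlam : 0 < lam)
    (w : EuclideanSpace ℝ (Fin N) → ℝ) (σ : ℝ) (hσ : 0 < σ)
    (hwcont : Continuous w) (hwpos : ∀ x, 0 < w x)
    (hwrad : ∀ x y : EuclideanSpace ℝ (Fin N), ‖x‖ = ‖y‖ → w x = w y)
    (hwlim : Tendsto
      (fun x => w x * ‖x‖ ^ (((N : ℝ) - 1) / 2) * Real.exp (Real.sqrt lam * ‖x‖))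
      (comap (fun x : EuclideanSpace ℝ (Fin N) => ‖x‖) atTop) (nhds σ))
    (f : ℝ → ℝ) (D p₁ p₂ : ℝ) (hD : 0 < D) (hp₁ : 1 < p₁) (hp : p₁ ≤ p₂)
    (hfcont : Continuous f) (hf0 : ∀ t ≤ (0:ℝ), f t = 0)
    (hfgrowth : ∀ t : ℝ, |f t| ≤ D * (|t| ^ p₁ + |t| ^ p₂))
    (F : ℝ → ℝ) (hF : ∀ t, F t = ∫ s in (0:ℝ)..t, f s)
    (ρ : ℝ) (hρ : 0 < ρ)
    (ξ : EuclideanSpace ℝ (Fin N) → ℝ) (hξ : ContDiff ℝ 1 ξ)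
    (hξ01 : ∀ x, ξ x ∈ Set.Icc (0:ℝ) 1)
    (hξ0 : ∀ x ∈ Metric.ball (0 : EuclideanSpace ℝ (Fin N)) ρ, ξ x = 0)
    (hξ1 : ∀ x ∉ Metric.ball (0 : EuclideanSpace ℝ (Fin N)) (2 * ρ), ξ x = 1)
    (θ : EuclideanSpace ℝ (Fin N)) (hθ : 1 ≤ ‖θ‖) :
    ∃ η : ℝ → ℝ, (∀ R, 0 ≤ η R) ∧ Tendsto η atTop (nhds 0) ∧
      ∀ τ ≥ (0:ℝ), ∀ R > (0:ℝ),
        |∫ x, (F (τ * (ξ x * w (x - R • θ))) - F (τ * w (x - R • θ)))| ≤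
          (τ ^ (p₁ + 1) + τ ^ (p₂ + 1)) * η R *
            R ^ (-(((N : ℝ) - 1) / 2)) * Real.exp (-(2 * R * Real.sqrt lam)) := by
  classical
  set α : ℝ := ((N : ℝ) - 1) / 2 with hα
  have hN2 : (2:ℝ) ≤ (N:ℝ) := by exact_mod_cast hN
  have hα0 : 0 ≤ α := by rw [hα]; apply div_nonneg <;> linarith
  have hsl : 0 < Real.sqrt lam := Real.sqrt_pos.mpr hlam
  have hP₁ : 0 ≤ p₁ + 1 := by linarith
  have hP₂ : 0 ≤ p₂ + 1 := by linarith
  have hwnn : ∀ x : EuclideanSpace ℝ (Fin N), 0 ≤ w x := fun x => (hwpos x).le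
  -- continuity of F
  have hFc : Continuous F := by
    have h := intervalIntegral.continuous_primitive (μ := volume)
      (fun a b => hfcont.intervalIntegrable a b) 0
    have : F = fun t => ∫ s in (0:ℝ)..t, f s := funext hF
    rw [this]; exact h
  -- basic bound on F
  have hFbound : ∀ t : ℝ, 0 ≤ t → |F t| ≤ D * (t ^ (p₁ + 1) + t ^ (p₂ + 1)) := by
    intro t ht
    rcases eq_or_lt_of_le ht with h0 | h0
    · rw [← h0, hF, intervalIntegral.integral_same, abs_zero,
        Real.zero_rpow (by linarith), Real.zero_rpow (by linarith)]
      simp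
    · have key : ‖∫ s in (0:ℝ)..t, f s‖ ≤ D * (t ^ p₁ + t ^ p₂) * |t - 0| := by
        apply intervalIntegral.norm_integral_le_of_norm_le_const
        intro s hs
        rw [Set.uIoc_of_le ht] at hs
        have hs0 : 0 < s := hs.1
        have hst : s ≤ t := hs.2
        have h1 : |f s| ≤ D * (|s| ^ p₁ + |s| ^ p₂) := hfgrowth s
        have h2 : |s| ^ p₁ ≤ t ^ p₁ := by
          rw [abs_of_pos hs0]; exact Real.rpow_le_rpow hs0.le hst (by linarith)
        have h3 : |s| ^ p₂ ≤ t ^ p₂ := by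
          rw [abs_of_pos hs0]; exact Real.rpow_le_rpow hs0.le hst (by linarith)
        rw [Real.norm_eq_abs]
        nlinarith
      rw [hF, ← Real.norm_eq_abs]
      refine key.trans (le_of_eq ?_)
      rw [sub_zero, abs_of_pos h0, Real.rpow_add_one h0.ne' p₁,
        Real.rpow_add_one h0.ne' p₂]
      ring
  -- the sup function
  set q : ℝ → EuclideanSpace ℝ (Fin N) → ℝ :=
    fun R x => w (x - R • θ) ^ (p₁ + 1) + w (x - R • θ) ^ (p₂ + 1) with hqdef
  have hqc : ∀ R, Continuous (q R) := by
    intro R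
    have h1 : Continuous fun x : EuclideanSpace ℝ (Fin N) => w (x - R • θ) :=
      hwcont.comp (continuous_id.sub continuous_const)
    exact (h1.rpow_const fun x => Or.inr hP₁).add (h1.rpow_const fun x => Or.inr hP₂)
  have hqnn : ∀ R x, 0 ≤ q R x := by
    intro R x
    exact add_nonneg (Real.rpow_nonneg (hwnn _) _) (Real.rpow_nonneg (hwnn _) _)
  set K : Set (EuclideanSpace ℝ (Fin N)) := Metric.closedBall 0 (2 * ρ) with hKdef
  have hKc : IsCompact K := isCompact_closedBall _ _
  have h0K : (0 : EuclideanSpace ℝ (Fin N)) ∈ K := mem_closedBall_self (by linarith)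
  set m : ℝ → ℝ := fun R => sSup (q R '' K) with hmdef
  have hbdd : ∀ R, BddAbove (q R '' K) := fun R => (hKc.image (hqc R)).bddAbove
  have hmle : ∀ R, ∀ x ∈ K, q R x ≤ m R := fun R x hx =>
    le_csSup (hbdd R) ⟨x, hx, rfl⟩
  have hm0 : ∀ R, 0 ≤ m R := fun R => (hqnn R 0).trans (hmle R 0 h0K)
  set V : ℝ := (volume K).toReal with hVdef
  have hV0 : 0 ≤ V := ENNReal.toReal_nonneg
  refine ⟨fun R => 2 * D * V * m R * |R| ^ α * Real.exp (2 * |R| * Real.sqrt lam),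
    ?_, ?_, ?_⟩
  · intro R
    have h1 := hm0 R
    have h2 : (0:ℝ) ≤ |R| ^ α := Real.rpow_nonneg (abs_nonneg R) α
    exact mul_nonneg (mul_nonneg (mul_nonneg (mul_nonneg (by positivity) hV0) h1) h2)
      (Real.exp_pos _).le
  · -- tendsto 0
    -- decay of w
    have hev : ∀ᶠ r in atTop, ∀ x : EuclideanSpace ℝ (Fin N), ‖x‖ = r →
        w x * ‖x‖ ^ α * Real.exp (Real.sqrt lam * ‖x‖) < 2 * σ := by
      have h := hwlim.eventually (eventually_lt_nhds (by linarith : σ < 2 * σ))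
      rwa [eventually_comap] at h
    obtain ⟨r₀, hr₀⟩ := eventually_atTop.mp hev
    set r₁ : ℝ := max r₀ 1 with hr₁def
    have hdecay : ∀ x : EuclideanSpace ℝ (Fin N), r₁ ≤ ‖x‖ →
        w x ≤ 2 * σ * Real.exp (-(Real.sqrt lam * ‖x‖)) := by
      intro x hx
      have h1 := hr₀ ‖x‖ ((le_max_left _ _).trans hx) x rfl
      have hx1 : (1:ℝ) ≤ ‖x‖ := (le_max_right _ _).trans hx
      have h2 : (1:ℝ) ≤ ‖x‖ ^ α := Real.one_le_rpow hx1 hα0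
      have hE : 0 < Real.exp (Real.sqrt lam * ‖x‖) := Real.exp_pos _
      have h3 : w x * Real.exp (Real.sqrt lam * ‖x‖) ≤ 2 * σ := by
        nlinarith [hwnn x]
      rw [Real.exp_neg, mul_comm (2 * σ), ← div_eq_inv_mul, le_div_iff₀ hE]
      exact h3
    -- eventual bound on m
    set B : ℝ := 2 * σ with hBdef
    have hB0 : 0 ≤ B := by positivity
    set C₀ : ℝ := B ^ (p₁ + 1) + B ^ (p₂ + 1) with hC₀def
    have hC₀0 : 0 ≤ C₀ :=
      add_nonneg (Real.rpow_nonneg hB0 _) (Real.rpow_nonneg hB0 _)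
    have hmev : ∀ R : ℝ, r₁ + 2 * ρ ≤ R →
        m R ≤ C₀ * Real.exp (-(Real.sqrt lam * (R - 2 * ρ)) * (p₁ + 1)) := by
      intro R hR
      have hr₁1 : (1:ℝ) ≤ r₁ := le_max_right _ _
      have hRpos : 0 < R := by linarith
      apply csSup_le (Set.Nonempty.image _ ⟨0, h0K⟩)
      rintro y ⟨x, hx, rfl⟩
      have hxK : ‖x‖ ≤ 2 * ρ := by
        simpa [hKdef, dist_eq_norm] using hx
      have hnorm : R - 2 * ρ ≤ ‖x - R • θ‖ := by
        have h1 : ‖R • θ‖ - ‖x‖ ≤ ‖R • θ - x‖ := norm_sub_norm_le _ _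
        have h2 : ‖R • θ‖ = |R| * ‖θ‖ := by rw [norm_smul, Real.norm_eq_abs]
        have h3 : R ≤ |R| * ‖θ‖ := by
          rw [abs_of_pos hRpos]; nlinarith
        rw [norm_sub_rev]; linarith
      have hr₁x : r₁ ≤ ‖x - R • θ‖ := by linarith
      have hw1 : w (x - R • θ) ≤ B * Real.exp (-(Real.sqrt lam * (R - 2 * ρ))) := by
        refine (hdecay _ hr₁x).trans ?_
        have : Real.exp (-(Real.sqrt lam * ‖x - R • θ‖)) ≤
            Real.exp (-(Real.sqrt lam * (R - 2 * ρ))) := by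
          apply Real.exp_le_exp.mpr
          have := mul_le_mul_of_nonneg_left hnorm hsl.le
          linarith
        nlinarith [Real.exp_pos (-(Real.sqrt lam * ‖x - R • θ‖))]
      set s : ℝ := Real.sqrt lam * (R - 2 * ρ) with hsdef
      have hs0 : 0 ≤ s := by
        have : 0 ≤ R - 2 * ρ := by linarith
        positivity
      have hwy : 0 ≤ w (x - R • θ) := hwnn _
      have key : ∀ p : ℝ, p₁ ≤ p →
          w (x - R • θ) ^ (p + 1) ≤ B ^ (p + 1) * Real.exp (-s * (p₁ + 1)) := by
        intro p hpp
        have h1 : w (x - R • θ) ^ (p + 1) ≤ (B * Real.exp (-s)) ^ (p + 1) :=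
          Real.rpow_le_rpow hwy hw1 (by linarith)
        have h2 : (B * Real.exp (-s)) ^ (p + 1)
            = B ^ (p + 1) * Real.exp (-s * (p + 1)) := by
          rw [Real.mul_rpow hB0 (Real.exp_pos _).le, ← Real.exp_mul]
        have h3 : Real.exp (-s * (p + 1)) ≤ Real.exp (-s * (p₁ + 1)) := by
          apply Real.exp_le_exp.mpr
          nlinarith
        have h4 : 0 ≤ B ^ (p + 1) := Real.rpow_nonneg hB0 _
        calc w (x - R • θ) ^ (p + 1) ≤ B ^ (p + 1) * Real.exp (-s * (p + 1)) := by
              rw [← h2]; exact h1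
          _ ≤ B ^ (p + 1) * Real.exp (-s * (p₁ + 1)) := by nlinarith
      have k1 := key p₁ le_rfl
      have k2 := key p₂ hp
      have hqx : q R x = w (x - R • θ) ^ (p₁ + 1) + w (x - R • θ) ^ (p₂ + 1) := rfl
      have hCx : C₀ = B ^ (p₁ + 1) + B ^ (p₂ + 1) := rfl
      show q R x ≤ C₀ * Real.exp (-s * (p₁ + 1))
      rw [hqx, hCx]
      linarith [k1, k2]
    -- squeeze
    set c : ℝ := (p₁ - 1) * Real.sqrt lam with hcdef
    have hc0 : 0 < c := mul_pos (by linarith) hsl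
    set C₃ : ℝ := 2 * D * V * C₀ * Real.exp (Real.sqrt lam * 2 * ρ * (p₁ + 1))
      with hC₃def
    have hten : Tendsto (fun R : ℝ => C₃ * (R ^ α * Real.exp (-c * R)))
        atTop (nhds 0) := by
      have := (tendsto_rpow_mul_exp_neg_mul_atTop_nhds_zero α c hc0).const_mul C₃
      simpa using this
    apply squeeze_zero' (g := fun R : ℝ => C₃ * (R ^ α * Real.exp (-c * R)))
    · filter_upwards with R
      have h1 := hm0 R
      have h2 : (0:ℝ) ≤ |R| ^ α := Real.rpow_nonneg (abs_nonneg R) α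
      exact mul_nonneg (mul_nonneg (mul_nonneg (mul_nonneg (by positivity) hV0) h1) h2)
        (Real.exp_pos _).le
    · filter_upwards [eventually_ge_atTop (r₁ + 2 * ρ), eventually_gt_atTop (0:ℝ)]
        with R hR hR0
      have h1 := hmev R hR
      simp only [abs_of_pos hR0]
      have hRα : (0:ℝ) ≤ R ^ α := Real.rpow_nonneg hR0.le α
      have hEp : (0:ℝ) < Real.exp (2 * R * Real.sqrt lam) := Real.exp_pos _
      calc 2 * D * V * m R * R ^ α * Real.exp (2 * R * Real.sqrt lam)
          ≤ 2 * D * V * (C₀ * Real.exp (-(Real.sqrt lam * (R - 2 * ρ)) * (p₁ + 1)))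
            * R ^ α * Real.exp (2 * R * Real.sqrt lam) := by
            have h2 : 0 ≤ 2 * D * V := by positivity
            nlinarith [mul_le_mul_of_nonneg_left h1 h2,
              mul_le_mul_of_nonneg_right
                (mul_le_mul_of_nonneg_left h1 h2) hRα]
        _ = C₃ * (R ^ α * Real.exp (-c * R)) := by
            rw [hC₃def, hcdef]
            have : Real.exp (-(Real.sqrt lam * (R - 2 * ρ)) * (p₁ + 1))
                * Real.exp (2 * R * Real.sqrt lam)
                = Real.exp (Real.sqrt lam * 2 * ρ * (p₁ + 1))
                  * Real.exp (-((p₁ - 1) * Real.sqrt lam) * R) := by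
              rw [← Real.exp_add, ← Real.exp_add]
              congr 1
              ring
            linear_combination (2 * D * V * C₀ * R ^ α) * this
    · exact hten
  · -- main estimate
    intro τ hτ R hR
    set S : ℝ := τ ^ (p₁ + 1) + τ ^ (p₂ + 1) with hSdef
    have hS0 : 0 ≤ S :=
      add_nonneg (Real.rpow_nonneg hτ _) (Real.rpow_nonneg hτ _)
    set g : EuclideanSpace ℝ (Fin N) → ℝ :=
      fun x => F (τ * (ξ x * w (x - R • θ))) - F (τ * w (x - R • θ)) with hgdef
    have hg0 : ∀ x ∉ K, g x = 0 := by
      intro x hx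
      have hx' : x ∉ Metric.ball (0 : EuclideanSpace ℝ (Fin N)) (2 * ρ) := fun h => hx (ball_subset_closedBall h)
      rw [hgdef]
      simp only [hξ1 x hx', one_mul, sub_self]
    have hgbound : ∀ x ∈ K, ‖g x‖ ≤ 2 * D * S * m R := by
      intro x hx
      set b : ℝ := τ * w (x - R • θ) with hbdef
      set a : ℝ := τ * (ξ x * w (x - R • θ)) with hadef
      have hwy := hwpos (x - R • θ)
      have hξx := hξ01 x
      have ha0 : 0 ≤ a := by
        rw [hadef]; exact mul_nonneg hτ (mul_nonneg hξx.1 hwy.le)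
      have hab : a ≤ b := by
        rw [hadef, hbdef]
        have : ξ x * w (x - R • θ) ≤ w (x - R • θ) := by nlinarith [hξx.2]
        exact mul_le_mul_of_nonneg_left this hτ
      have hb0 : 0 ≤ b := ha0.trans hab
      have h1 := hFbound a ha0
      have h2 := hFbound b hb0
      have h3 : a ^ (p₁ + 1) ≤ b ^ (p₁ + 1) := Real.rpow_le_rpow ha0 hab hP₁
      have h4 : a ^ (p₂ + 1) ≤ b ^ (p₂ + 1) := Real.rpow_le_rpow ha0 hab hP₂
      have h5 : b ^ (p₁ + 1) = τ ^ (p₁ + 1) * w (x - R • θ) ^ (p₁ + 1) :=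
        Real.mul_rpow hτ hwy.le
      have h6 : b ^ (p₂ + 1) = τ ^ (p₂ + 1) * w (x - R • θ) ^ (p₂ + 1) :=
        Real.mul_rpow hτ hwy.le
      have h7 : q R x ≤ m R := hmle R x hx
      have h8 : ‖g x‖ ≤ |F a| + |F b| := by
        rw [hgdef, Real.norm_eq_abs]
        exact abs_sub _ _
      have hq := hqnn R x
      have hτ1 : 0 ≤ τ ^ (p₁ + 1) := Real.rpow_nonneg hτ _
      have hτ2 : 0 ≤ τ ^ (p₂ + 1) := Real.rpow_nonneg hτ _
      have hw1 : 0 ≤ w (x - R • θ) ^ (p₁ + 1) := Real.rpow_nonneg hwy.le _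
      have hw2 : 0 ≤ w (x - R • θ) ^ (p₂ + 1) := Real.rpow_nonneg hwy.le _
      have hqx : q R x = w (x - R • θ) ^ (p₁ + 1) + w (x - R • θ) ^ (p₂ + 1) := rfl
      have hSx : S = τ ^ (p₁ + 1) + τ ^ (p₂ + 1) := rfl
      calc ‖g x‖ ≤ |F a| + |F b| := h8
        _ ≤ 2 * D * (b ^ (p₁ + 1) + b ^ (p₂ + 1)) := by
              nlinarith [mul_le_mul_of_nonneg_left h3 hD.le,
                mul_le_mul_of_nonneg_left h4 hD.le]
        _ = 2 * D * (τ ^ (p₁ + 1) * w (x - R • θ) ^ (p₁ + 1)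
              + τ ^ (p₂ + 1) * w (x - R • θ) ^ (p₂ + 1)) := by rw [h5, h6]
        _ ≤ 2 * D * (S * q R x) := by
              rw [hqx, hSx]
              nlinarith [mul_nonneg (mul_nonneg hD.le hτ1) hw2,
                mul_nonneg (mul_nonneg hD.le hτ2) hw1]
        _ ≤ 2 * D * (S * m R) :=
              mul_le_mul_of_nonneg_left (mul_le_mul_of_nonneg_left h7 hS0)
                (by positivity)
        _ = 2 * D * S * m R := by ring
    have hgc : Continuous g := by
      have h1 : Continuous fun x : EuclideanSpace ℝ (Fin N) => w (x - R • θ) :=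
        hwcont.comp (continuous_id.sub continuous_const)
      exact (hFc.comp ((continuous_const.mul (hξ.continuous.mul h1)))).sub
        (hFc.comp (continuous_const.mul h1))
    have hKfin : volume K < ⊤ := measure_closedBall_lt_top
    have hint : ∫ x, g x = ∫ x in K, g x :=
      (setIntegral_eq_integral_of_forall_compl_eq_zero hg0).symm
    have hmain : ‖∫ x in K, g x‖ ≤ 2 * D * S * m R * V := by
      exact norm_setIntegral_le_of_norm_le_const hKfin hgbound
    have habs : |∫ x, g x| ≤ 2 * D * S * m R * V := by
      rw [← Real.norm_eq_abs, hint]; exact hmain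
    refine habs.trans (le_of_eq ?_)
    simp only [abs_of_pos hR]
    have e1 : R ^ (-α) = (R ^ α)⁻¹ := Real.rpow_neg hR.le α
    have e2 : Real.exp (-(2 * R * Real.sqrt lam)) =
        (Real.exp (2 * R * Real.sqrt lam))⁻¹ := Real.exp_neg _
    have hRα : (0:ℝ) < R ^ α := Real.rpow_pos_of_pos hR α
    have hEx : (0:ℝ) < Real.exp (2 * R * Real.sqrt lam) := Real.exp_pos _
    rw [e1, e2]
    field_simp
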